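/- Let $\Theta : [0,\Delta t] \times \Omega \to \mathbb{R}^M$ be smooth in its first argument, with $\Omega \subset \mathbb{R}^K$ compact, and suppose $\Theta(\tau,\chi) = O(\tau^p)$ uniformly in $\chi$ (i.e. $\partial_1^j \Theta(0,\chi) = 0$ for $j = 0,\dots,p-1$). Define $\mathcal{L}(\Delta t,\chi) = \int_0^{\Delta t} \Theta(\tau,\chi)\,d\tau$ and $L(\Delta t,\chi) = \frac{\Delta t}{p+1}\Theta(\Delta t,\chi)$. Then there exists a constant $C$, independent of $\chi$, such that $\|L(\Delta t,\chi) - \mathcal{L}(\Delta t,\chi)\| \le C \Delta t^{p+2}$ for all $\chi \in \Omega$. Moreover one may take $C = \frac{2p+3}{(p+2)!(p+1)} \widetilde{C}$ where $\widetilde{C} = \max_{(\xi,\chi) \in [0,\Delta t]\times \Omega} \|\partial_1^{p+1}\Theta(\xi,\chi)\|$. -/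

import Mathlib

open Set intervalIntegral MeasureTheory

theorem taylor_sharp {E : Type*} [NormedAddCommGroup E] [NormedSpace ℝ E]
    [CompleteSpace E] {f : ℝ → E} {b C : ℝ} {n : ℕ} (hb : 0 < b)
    (hf : ContDiffOn ℝ (n + 1) f (Icc 0 b)) {x : ℝ} (hx : x ∈ Icc 0 b)
    (hC : ∀ y ∈ Icc 0 b, ‖iteratedDerivWithin (n + 1) f (Icc 0 b) y‖ ≤ C) :
    ‖f x - taylorWithinEval f n (Icc 0 b) 0 x‖ ≤ C * x ^ (n + 1) / (Nat.factorial (n + 1)) := by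
  have hC0 : 0 ≤ C := le_trans (norm_nonneg _) (hC 0 (by constructor <;> simp [hb.le]))
  have hf' : DifferentiableOn ℝ (iteratedDerivWithin n f (Icc 0 b)) (Icc 0 b) :=
    hf.differentiableOn_iteratedDerivWithin (mod_cast n.lt_succ_self) (uniqueDiffOn_Icc hb)
  have hcont' : ContinuousOn (iteratedDerivWithin (n + 1) f (Icc 0 b)) (Icc 0 b) :=
    hf.continuousOn_iteratedDerivWithin le_rfl (uniqueDiffOn_Icc hb)
  set g' : ℝ → E := fun t => ((n.factorial : ℝ)⁻¹ * (x - t) ^ n) • iteratedDerivWithin (n + 1) f (Icc 0 b) t with hg'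
  have hg'cont : ContinuousOn g' (Icc 0 b) := by
    exact ((continuousOn_const.mul ((continuousOn_const.sub continuousOn_id).pow n)).smul hcont')
  have hsub : Icc 0 x ⊆ Icc 0 b := Icc_subset_Icc le_rfl hx.2
  have hint : IntervalIntegrable g' volume 0 x := by
    apply ContinuousOn.intervalIntegrable
    rw [uIcc_of_le hx.1]
    exact hg'cont.mono hsub
  have hc : ContinuousOn (fun t => taylorWithinEval f n (Icc 0 b) t x) (Icc 0 x) :=
    (continuousOn_taylorWithinEval (uniqueDiffOn_Icc hb) hf.of_succ).mono hsub
  have hd : ∀ t ∈ Ioo 0 x,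
      HasDerivWithinAt (fun t => taylorWithinEval f n (Icc 0 b) t x) (g' t) (Ioi t) t := by
    intro t ht
    have ht' : t ∈ Ioo 0 b := ⟨ht.1, lt_of_lt_of_le ht.2 hx.2⟩
    exact (taylorWithinEval_hasDerivAt_Ioo x hb ht' hf.of_succ (hf'.mono Set.Ioo_subset_Icc_self)).hasDerivWithinAt
  have heq := integral_eq_sub_of_hasDeriv_right_of_le hx.1 hc hd hint
  rw [taylorWithinEval_self] at heq
  have key : f x - taylorWithinEval f n (Icc 0 b) 0 x = ∫ t in (0:ℝ)..x, g' t := by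
    rw [heq]
  rw [key]
  have hbnd : ∀ t ∈ Icc 0 x, ‖g' t‖ ≤ ((n.factorial : ℝ)⁻¹ * (x - t) ^ n) * C := by
    intro t ht
    rw [hg', norm_smul, Real.norm_eq_abs]
    have hxt : (0:ℝ) ≤ x - t := sub_nonneg.2 ht.2
    rw [abs_of_nonneg (by positivity)]
    exact mul_le_mul_of_nonneg_left (hC t (hsub ht)) (by positivity)
  have hintb : IntervalIntegrable (fun t => ((n.factorial : ℝ)⁻¹ * (x - t) ^ n) * C)
      volume 0 x := by
    apply Continuous.intervalIntegrable
    continuity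
  have h1 : ‖∫ t in (0:ℝ)..x, g' t‖ ≤ ∫ t in (0:ℝ)..x, ((n.factorial : ℝ)⁻¹ * (x - t) ^ n) * C := by
    refine (intervalIntegral.norm_integral_le_integral_norm hx.1).trans ?_
    exact intervalIntegral.integral_mono_on hx.1 hint.norm hintb hbnd
  refine h1.trans ?_
  have h2 : ∫ t in (0:ℝ)..x, ((n.factorial : ℝ)⁻¹ * (x - t) ^ n) * C
      = (n.factorial : ℝ)⁻¹ * C * (x ^ (n + 1) / (n + 1)) := by
    rw [intervalIntegral.integral_mul_const, intervalIntegral.integral_const_mul]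
    have h3 := intervalIntegral.integral_comp_sub_left (a := (0:ℝ)) (b := x) (fun t : ℝ => t ^ n) x
    simp only [sub_self, sub_zero] at h3
    rw [h3, integral_pow]
    ring
  rw [h2, Nat.factorial_succ]
  have hnf : (0:ℝ) < n.factorial := by exact_mod_cast n.factorial_pos
  apply le_of_eq
  push_cast
  field_simp

theorem stmt_0 (K M p : ℕ) (Δt : ℝ) (hΔt : 0 < Δt)
    (Ω : Set (EuclideanSpace ℝ (Fin K))) (hΩ : IsCompact Ω)
    (Θ : ℝ → EuclideanSpace ℝ (Fin K) → EuclideanSpace ℝ (Fin M))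
    (hsmooth : ∀ χ ∈ Ω, ContDiffOn ℝ (p + 1) (fun τ => Θ τ χ) (Set.Icc 0 Δt))
    (hcont : ContinuousOn
      (fun q : ℝ × EuclideanSpace ℝ (Fin K) =>
        iteratedDerivWithin (p + 1) (fun τ => Θ τ q.2) (Set.Icc 0 Δt) q.1)
      (Set.Icc 0 Δt ×ˢ Ω))
    (hvanish : ∀ χ ∈ Ω, ∀ j < p,
      iteratedDerivWithin j (fun τ => Θ τ χ) (Set.Icc 0 Δt) 0 = 0)
    (Ctil : ℝ)
    (hCtil : Ctil = sSup ((fun q : ℝ × EuclideanSpace ℝ (Fin K) =>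
      ‖iteratedDerivWithin (p + 1) (fun τ => Θ τ q.2) (Set.Icc 0 Δt) q.1‖) ''
      (Set.Icc 0 Δt ×ˢ Ω))) :
    ∀ χ ∈ Ω,
      ‖(Δt / (p + 1)) • Θ Δt χ - ∫ τ in (0 : ℝ)..Δt, Θ τ χ‖ ≤
        (2 * p + 3) / (Nat.factorial (p + 2) * (p + 1)) * Ctil * Δt ^ (p + 2) := by
  intro χ hχ
  set f : ℝ → EuclideanSpace ℝ (Fin M) := fun τ => Θ τ χ with hf
  have hfc : ContDiffOn ℝ (p + 1) f (Icc 0 Δt) := hsmooth χ hχ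
  -- the sup bound
  have hcomp : IsCompact ((fun q : ℝ × EuclideanSpace ℝ (Fin K) =>
      ‖iteratedDerivWithin (p + 1) (fun τ => Θ τ q.2) (Set.Icc 0 Δt) q.1‖) ''
      (Set.Icc 0 Δt ×ˢ Ω)) :=
    (isCompact_Icc.prod hΩ).image_of_continuousOn hcont.norm
  have hCb : ∀ y ∈ Icc (0:ℝ) Δt, ‖iteratedDerivWithin (p + 1) f (Icc 0 Δt) y‖ ≤ Ctil := by
    intro y hy
    rw [hCtil]
    exact le_csSup hcomp.bddAbove ⟨(y, χ), ⟨hy, hχ⟩, rfl⟩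
  have h0m : (0:ℝ) ∈ Icc (0:ℝ) Δt := ⟨le_rfl, hΔt.le⟩
  have hCt0 : 0 ≤ Ctil := le_trans (norm_nonneg _) (hCb 0 h0m)
  set d : EuclideanSpace ℝ (Fin M) := iteratedDerivWithin p f (Icc 0 Δt) 0 with hd
  -- Taylor polynomial reduces to a single term
  have hTay : ∀ x : ℝ, taylorWithinEval f p (Icc 0 Δt) 0 x
      = ((p.factorial : ℝ)⁻¹ * x ^ p) • d := by
    intro x
    rw [taylor_within_apply]
    rw [Finset.sum_eq_single_of_mem p (Finset.self_mem_range_succ p)]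
    · simp [hd]
    · intro k hk hkp
      have hklt : k < p := lt_of_le_of_ne (Nat.lt_succ_iff.mp (Finset.mem_range.mp hk)) hkp
      rw [hvanish χ hχ k hklt, smul_zero]
  set R : ℝ → EuclideanSpace ℝ (Fin M) :=
    fun τ => f τ - ((p.factorial : ℝ)⁻¹ * τ ^ p) • d with hRdef
  have hRb : ∀ τ ∈ Icc (0:ℝ) Δt, ‖R τ‖ ≤ Ctil * τ ^ (p + 1) / (Nat.factorial (p + 1)) := by
    intro τ hτ
    have := taylor_sharp hΔt hfc hτ hCb
    rwa [hTay] at this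
  -- integrability
  have hfint : IntervalIntegrable f volume 0 Δt := by
    apply ContinuousOn.intervalIntegrable
    rw [uIcc_of_le hΔt.le]
    exact hfc.continuousOn
  have hpint : IntervalIntegrable (fun τ : ℝ => ((p.factorial : ℝ)⁻¹ * τ ^ p) • d)
      volume 0 Δt :=
    ((continuous_const.mul (continuous_pow p)).smul continuous_const).intervalIntegrable _ _
  have hRint : IntervalIntegrable R volume 0 Δt := hfint.sub hpint
  have hsplit : ∫ τ in (0:ℝ)..Δt, f τ
      = (∫ τ in (0:ℝ)..Δt, R τ) + ∫ τ in (0:ℝ)..Δt, ((p.factorial : ℝ)⁻¹ * τ ^ p) • d := by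
    rw [← intervalIntegral.integral_add hRint hpint]
    congr 1
    funext τ
    simp [hRdef]
  have hpoly : ∫ τ in (0:ℝ)..Δt, ((p.factorial : ℝ)⁻¹ * τ ^ p) • d
      = ((p.factorial : ℝ)⁻¹ * (Δt ^ (p + 1) / (p + 1))) • d := by
    rw [intervalIntegral.integral_smul_const, intervalIntegral.integral_const_mul, integral_pow]
    norm_num
  have key : (Δt / ((p:ℝ) + 1)) • f Δt - ∫ τ in (0:ℝ)..Δt, f τ
      = (Δt / ((p:ℝ) + 1)) • R Δt - ∫ τ in (0:ℝ)..Δt, R τ := by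
    have hfΔ : f Δt = R Δt + ((p.factorial : ℝ)⁻¹ * Δt ^ p) • d := by simp [hRdef]
    rw [hfΔ, hsplit, hpoly, smul_add, smul_smul]
    have hp1 : ((p:ℝ) + 1) ≠ 0 := by positivity
    have hsc : (Δt / ((p:ℝ) + 1)) * ((p.factorial : ℝ)⁻¹ * Δt ^ p)
        = (p.factorial : ℝ)⁻¹ * (Δt ^ (p + 1) / ((p:ℝ) + 1)) := by
      field_simp
      ring
    rw [hsc]
    abel
  rw [show (Δt / (↑p + 1)) • Θ Δt χ - ∫ τ in (0:ℝ)..Δt, Θ τ χ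
      = (Δt / ((p:ℝ) + 1)) • f Δt - ∫ τ in (0:ℝ)..Δt, f τ from rfl, key]
  -- bound the two remainder pieces
  have hb1 : ‖(Δt / ((p:ℝ) + 1)) • R Δt‖
      ≤ (Δt / ((p:ℝ) + 1)) * (Ctil * Δt ^ (p + 1) / (Nat.factorial (p + 1))) := by
    rw [norm_smul, Real.norm_eq_abs, abs_of_nonneg (by positivity)]
    exact mul_le_mul_of_nonneg_left (hRb Δt ⟨hΔt.le, le_rfl⟩) (by positivity)
  have hbint : IntervalIntegrable (fun τ : ℝ => Ctil * τ ^ (p + 1) / (Nat.factorial (p + 1)))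
      volume 0 Δt :=
    ((continuous_const.mul (continuous_pow (p+1))).div_const _).intervalIntegrable _ _
  have hb2 : ‖∫ τ in (0:ℝ)..Δt, R τ‖
      ≤ Ctil / (Nat.factorial (p + 1)) * (Δt ^ (p + 2) / ((p:ℝ) + 2)) := by
    refine (intervalIntegral.norm_integral_le_integral_norm hΔt.le).trans ?_
    have h1 : ∫ τ in (0:ℝ)..Δt, ‖R τ‖
        ≤ ∫ τ in (0:ℝ)..Δt, Ctil * τ ^ (p + 1) / (Nat.factorial (p + 1)) :=
      intervalIntegral.integral_mono_on hΔt.le hRint.norm hbint hRb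
    refine h1.trans ?_
    have h2 : ∀ τ : ℝ, Ctil * τ ^ (p + 1) / (Nat.factorial (p + 1))
        = (Ctil / (Nat.factorial (p + 1))) * τ ^ (p + 1) := by intro τ; ring
    simp_rw [h2]
    rw [intervalIntegral.integral_const_mul, integral_pow]
    apply le_of_eq
    rw [zero_pow (by omega : p + 1 + 1 ≠ 0)]
    push_cast
    ring
  calc ‖(Δt / ((p:ℝ) + 1)) • R Δt - ∫ τ in (0:ℝ)..Δt, R τ‖
      ≤ ‖(Δt / ((p:ℝ) + 1)) • R Δt‖ + ‖∫ τ in (0:ℝ)..Δt, R τ‖ := norm_sub_le _ _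
    _ ≤ (Δt / ((p:ℝ) + 1)) * (Ctil * Δt ^ (p + 1) / (Nat.factorial (p + 1)))
        + Ctil / (Nat.factorial (p + 1)) * (Δt ^ (p + 2) / ((p:ℝ) + 2)) := add_le_add hb1 hb2
    _ = (2 * p + 3) / (Nat.factorial (p + 2) * (p + 1)) * Ctil * Δt ^ (p + 2) := by
        rw [Nat.factorial_succ (p + 1), Nat.factorial_succ p]
        have hpf : (0:ℝ) < p.factorial := by exact_mod_cast p.factorial_pos
        push_cast
        field_simp
        ring
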